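/- For integers n ≥ m ≥ 1 with m > 2, the quantity E[C_{n,m}]/n − 2, where E[C_{n,m}] = 2·[n + 3 + (n+1)·h_n − (m+2)·h_m − (n−m+3)·h_{n−m+1}], satisfies E[C_{n,m}]/n − 2 ≥ 2·[(m−2)·log n − |(m+2)·h_m − 3|]/n. -/

import Mathlib

/-- h_k is the k-th harmonic number. -/
noncomputable def harm (k : ℕ) : ℝ := ∑ j ∈ Finset.Icc 1 k, (1 : ℝ) / j

lemma harm_eq (k : ℕ) : harm k = (harmonic k : ℝ) := by
  rw [harm, harmonic_eq_sum_Icc]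
  push_cast
  simp [one_div]

lemma harm_nonneg (k : ℕ) : 0 ≤ harm k := by
  apply Finset.sum_nonneg; intro i _; positivity

lemma harm_mono : Monotone harm := by
  intro a b hab
  apply Finset.sum_le_sum_of_subset_of_nonneg
  · exact Finset.Icc_subset_Icc le_rfl hab
  · intro i _ _; positivity

lemma log_le_harm (k : ℕ) : Real.log k ≤ harm k := by
  rw [harm_eq]
  have := log_add_one_le_harmonic k
  have h2 : Real.log k ≤ Real.log (k + 1) := by
    rcases Nat.eq_zero_or_pos k with h | h
    · simp [h]
    · apply Real.log_le_log (by exact_mod_cast h); linarith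
  push_cast at this
  linarith

theorem stmt_12 (n m : ℕ) (hm : 2 < m) (hnm : m ≤ n) :
    2 * ((n : ℝ) + 3 + ((n : ℝ) + 1) * harm n - ((m : ℝ) + 2) * harm m
      - ((n : ℝ) - m + 3) * harm (n - m + 1)) / n - 2
      ≥ 2 * (((m : ℝ) - 2) * Real.log n - |((m : ℝ) + 2) * harm m - 3|) / n := by
  have hn0 : (0 : ℝ) < n := by
    have : 0 < n := lt_of_lt_of_le (by omega) hnm
    exact_mod_cast this
  have hm3 : (3 : ℝ) ≤ (m : ℝ) := by exact_mod_cast hm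
  have hmn : (m : ℝ) ≤ (n : ℝ) := by exact_mod_cast hnm
  rw [ge_iff_le, div_sub' (ne_of_gt hn0), div_le_div_iff₀ hn0 hn0]
  have h1 : harm (n - m + 1) ≤ harm n := harm_mono (by omega)
  have h2 : Real.log n ≤ harm n := log_le_harm n
  have h3 : -(((m : ℝ) + 2) * harm m - 3) ≤ |((m : ℝ) + 2) * harm m - 3| := neg_le_abs _
  have h3b : ((m : ℝ) + 2) * harm m - 3 ≤ |((m : ℝ) + 2) * harm m - 3| := le_abs_self _
  have h4 : 0 ≤ harm (n - m + 1) := harm_nonneg _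
  -- key: (n+1) harm n - (n-m+3) harm (n-m+1) ≥ (m-2) harm n ≥ (m-2) log n
  have h5 : ((m : ℝ) - 2) * Real.log n ≤ ((n : ℝ) + 1) * harm n - ((n : ℝ) - m + 3) * harm (n - m + 1) := by
    have hc : (0 : ℝ) ≤ (n : ℝ) - m + 3 := by linarith
    calc ((m : ℝ) - 2) * Real.log n ≤ ((m : ℝ) - 2) * harm n := by nlinarith
      _ = ((n : ℝ) + 1) * harm n - ((n : ℝ) - m + 3) * harm n := by ring
      _ ≤ _ := by nlinarith
  have key : ((m : ℝ) - 2) * Real.log n - |((m : ℝ) + 2) * harm m - 3|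
      ≤ (n : ℝ) + 3 + ((n : ℝ) + 1) * harm n - ((m : ℝ) + 2) * harm m
        - ((n : ℝ) - m + 3) * harm (n - m + 1) - n := by linarith
  nlinarith [mul_le_mul_of_nonneg_right key hn0.le]
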